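/- Let ℓ ≥ 2 and let A_1, …, A_ℓ be pairwise disjoint finite nonempty sets with union V. Let 𝒮 be a family of subsets of V such that |S ∩ A_i| = 1 for every S ∈ 𝒮 and every i, and for any two distinct S, T ∈ 𝒮 the number of indices i with S ∩ T ∩ A_i = ∅ is odd. Then |𝒮| ≤ |V| − ℓ + 1. -/
import Mathlib


/-- `𝒮` is a family of subsets of `V = A 0 ∪ … ∪ A (ℓ-1)` such that `|S ∩ A i| = 1` for all
`S ∈ 𝒮` and all `i`, and for distinct `S, T ∈ 𝒮` the number of indices `i` with
`S ∩ T ∩ A i = ∅` is odd. -/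
def IsXorSystem {α : Type*} [DecidableEq α] (ℓ : ℕ)
    (A : Fin ℓ → Finset α) (𝒮 : Finset (Finset α)) : Prop :=
  (∀ S ∈ 𝒮, S ⊆ Finset.univ.biUnion A) ∧
  (∀ S ∈ 𝒮, ∀ i, (S ∩ A i).card = 1) ∧
  (∀ S ∈ 𝒮, ∀ T ∈ 𝒮, S ≠ T →
    Odd ((Finset.univ.filter (fun i => S ∩ T ∩ A i = ∅)).card))

/-- Clique-number upper bound for the xor-product of complete graphs:
`|𝒮| ≤ |V| − ℓ + 1`. -/
theorem stmt_7 {α : Type*} [DecidableEq α] (ℓ : ℕ) (hℓ : 2 ≤ ℓ)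
    (A : Fin ℓ → Finset α)
    (hdisj : ∀ i j, i ≠ j → Disjoint (A i) (A j))
    (hne : ∀ i, (A i).Nonempty)
    (𝒮 : Finset (Finset α)) (hS : IsXorSystem ℓ A 𝒮) :
    𝒮.card ≤ (Finset.univ.biUnion A).card - ℓ + 1 := by
  classical
  obtain ⟨hsub, hone, hodd⟩ := hS
  set Vs : Finset α := Finset.univ.biUnion A with hVs
  rcases 𝒮.eq_empty_or_nonempty with h𝒮 | ⟨S₀, hS₀⟩
  · simp [h𝒮]
  -- basic decomposition lemmas
  have hLcard : ∀ s : Finset α, s ⊆ Vs → s.card = ∑ i, (s ∩ A i).card := by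
    intro s hs
    have hdecomp : s = Finset.univ.biUnion (fun i => s ∩ A i) := by
      ext x
      simp only [Finset.mem_biUnion, Finset.mem_univ, true_and, Finset.mem_inter]
      constructor
      · intro hx
        obtain ⟨i, _, hi⟩ := Finset.mem_biUnion.mp (hs hx)
        exact ⟨i, hx, hi⟩
      · rintro ⟨i, hx, _⟩; exact hx
    conv_lhs => rw [hdecomp]
    exact Finset.card_biUnion (fun i _ j _ hij =>
      (hdisj i j hij).mono (Finset.inter_subset_right) (Finset.inter_subset_right))
  have hScard : ∀ S ∈ 𝒮, S.card = ℓ := by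
    intro S hSm
    rw [hLcard S (hsub S hSm)]
    simp [hone S hSm]
  -- parity of pairwise intersections
  have hpair : ∀ S ∈ 𝒮, ∀ T ∈ 𝒮, S ≠ T →
      ((S ∩ T).card : ZMod 2) = (ℓ : ZMod 2) + 1 := by
    intro S hSm T hTm hST
    have hsubV : S ∩ T ⊆ Vs := (Finset.inter_subset_left).trans (hsub S hSm)
    rw [hLcard _ hsubV]
    push_cast
    have hsmall : ∀ i : Fin ℓ, ((S ∩ T ∩ A i).card : ZMod 2)
        = 1 + (if S ∩ T ∩ A i = ∅ then (1 : ZMod 2) else 0) := by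
      intro i
      by_cases h : S ∩ T ∩ A i = ∅
      · rw [h, if_pos rfl]; simp; decide
      · have h1 : (S ∩ T ∩ A i).card ≤ (S ∩ A i).card := by
          apply Finset.card_le_card
          intro x hx
          simp only [Finset.mem_inter] at hx ⊢
          exact ⟨hx.1.1, hx.2⟩
        have h2 : 1 ≤ (S ∩ T ∩ A i).card :=
          Finset.card_pos.mpr (Finset.nonempty_iff_ne_empty.mpr h)
        have : (S ∩ T ∩ A i).card = 1 := le_antisymm (by rw [hone S hSm i] at h1; exact h1) h2
        rw [this, if_neg h]; simp
    rw [Finset.sum_congr rfl (fun i _ => hsmall i)]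
    rw [Finset.sum_add_distrib]
    have hodd' := hodd S hSm T hTm hST
    have hk : ((Finset.univ.filter (fun i => S ∩ T ∩ A i = ∅)).card : ZMod 2) = 1 := by
      obtain ⟨m, hm⟩ := hodd'
      rw [hm]; push_cast
      simp [show ((2:ZMod 2)) = 0 by decide]
    rw [Finset.sum_boole]
    simp only [Finset.sum_const, Finset.card_univ, Fintype.card_fin, nsmul_eq_mul, mul_one]
    rw [hk]
  -- pick representatives of S₀
  have hpick : ∀ i, ∃ x, S₀ ∩ A i = {x} := fun i => Finset.card_eq_one.mp (hone S₀ hS₀ i)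
  choose a ha using hpick
  have haA : ∀ i, a i ∈ A i := by
    intro i
    have : a i ∈ S₀ ∩ A i := by rw [ha i]; exact Finset.mem_singleton_self _
    exact (Finset.mem_inter.mp this).2
  have hainj : Function.Injective a := by
    intro i j hij
    by_contra hne'
    exact Finset.disjoint_left.mp (hdisj i j hne') (hij ▸ haA i) (haA j)
  set R : Finset α := Finset.image a Finset.univ with hR
  have hRcard : R.card = ℓ := by
    rw [hR, Finset.card_image_of_injective _ hainj, Finset.card_univ, Fintype.card_fin]
  have hAV : ∀ i, A i ⊆ Vs := by
    intro i x hx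
    exact Finset.mem_biUnion.mpr ⟨i, Finset.mem_univ i, hx⟩
  have hRV : R ⊆ Vs := by
    intro x hx
    rw [hR] at hx
    obtain ⟨i, _, rfl⟩ := Finset.mem_image.mp hx
    exact hAV i (haA i)
  set D : Finset α := Vs \ R with hD
  have hDcard : D.card = Vs.card - ℓ := by rw [hD, Finset.card_sdiff_of_subset hRV, hRcard]
  -- pairing computation lemma
  have hBchi : ∀ s t : Finset α, s ⊆ Vs →
      (∑ x ∈ Vs, (if x ∈ s then (1 : ZMod 2) else 0) * (if x ∈ t then 1 else 0))
        = ((s ∩ t).card : ZMod 2) := by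
    intro s t hsV
    have : ∀ x, (if x ∈ s then (1 : ZMod 2) else 0) * (if x ∈ t then 1 else 0)
        = (if x ∈ s ∩ t then (1 : ZMod 2) else 0) := by
      intro x
      by_cases h1 : x ∈ s <;> by_cases h2 : x ∈ t <;>
        simp [h1, h2, Finset.mem_inter]
    rw [Finset.sum_congr rfl (fun x _ => this x), Finset.sum_boole]
    congr 1
    rw [Finset.filter_mem_eq_inter, Finset.inter_comm]
    congr 1
    exact Finset.inter_eq_left.mpr ((Finset.inter_subset_left).trans hsV)
  -- linear independence of the difference vectors over GF(2)
  have key : LinearIndependent (ZMod 2)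
      (fun S : {x // x ∈ 𝒮.erase S₀} => fun x : {y // y ∈ D} =>
        (if (x : α) ∈ (S : Finset α) then (1 : ZMod 2) else 0)
        + (if (x : α) ∈ S₀ then 1 else 0)) := by
    rw [Fintype.linearIndependent_iff]
    intro g hg
    set u : α → ZMod 2 := fun x => ∑ S : {x // x ∈ 𝒮.erase S₀},
      g S * ((if x ∈ (S : Finset α) then (1 : ZMod 2) else 0)
        + (if x ∈ S₀ then 1 else 0)) with hu
    have huD : ∀ x ∈ D, u x = 0 := by
      intro x hx
      have := congrFun hg ⟨x, hx⟩
      simpa [hu, Finset.sum_apply, smul_eq_mul] using this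
    have hchi : ∀ s t : Finset α,
        (∑ x ∈ t, (if x ∈ s then (1 : ZMod 2) else 0)) = ((s ∩ t).card : ZMod 2) := by
      intro s t
      rw [Finset.sum_boole]
      congr 1
      rw [Finset.filter_mem_eq_inter, Finset.inter_comm]
    have huA : ∀ i, ∑ x ∈ A i, u x = 0 := by
      intro i
      have h11 : (1 : ZMod 2) + 1 = 0 := by decide
      calc ∑ x ∈ A i, u x
          = ∑ S : {x // x ∈ 𝒮.erase S₀}, g S *
              ((∑ x ∈ A i, if x ∈ (S : Finset α) then (1 : ZMod 2) else 0)
              + ∑ x ∈ A i, if x ∈ S₀ then (1 : ZMod 2) else 0) := by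
            simp only [hu]
            rw [Finset.sum_comm]
            refine Finset.sum_congr rfl fun S _ => ?_
            rw [mul_add, Finset.mul_sum, Finset.mul_sum, ← Finset.sum_add_distrib]
            exact Finset.sum_congr rfl fun x _ => by ring
        _ = ∑ S : {x // x ∈ 𝒮.erase S₀}, g S *
              ((((S : Finset α) ∩ A i).card : ZMod 2) + ((S₀ ∩ A i).card : ZMod 2)) := by
            simp only [hchi]
        _ = 0 := by
            refine Finset.sum_eq_zero fun S _ => ?_
            rw [hone (S : Finset α) (Finset.mem_of_mem_erase S.2) i, hone S₀ hS₀ i]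
            rw [Nat.cast_one, h11, mul_zero]
    have huR : ∀ i, u (a i) = 0 := by
      intro i
      have hsplit : ∑ x ∈ A i, u x = u (a i) + ∑ x ∈ (A i).erase (a i), u x :=
        (Finset.add_sum_erase _ _ (haA i)).symm
      have hz : ∀ x ∈ (A i).erase (a i), u x = 0 := by
        intro x hx
        obtain ⟨hxne, hxA⟩ := Finset.mem_erase.mp hx
        apply huD
        rw [hD, Finset.mem_sdiff]
        refine ⟨hAV i hxA, ?_⟩
        intro hxR
        rw [hR] at hxR
        obtain ⟨j, _, hj⟩ := Finset.mem_image.mp hxR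
        by_cases hji : j = i
        · exact hxne (by rw [← hj, hji])
        · exact Finset.disjoint_left.mp (hdisj j i hji) (hj ▸ haA j) hxA
      rw [Finset.sum_eq_zero hz, add_zero] at hsplit
      rw [← hsplit]
      exact huA i
    have huV : ∀ x ∈ Vs, u x = 0 := by
      intro x hx
      by_cases hxR : x ∈ R
      · rw [hR] at hxR
        obtain ⟨i, _, rfl⟩ := Finset.mem_image.mp hxR
        exact huR i
      · exact huD x (Finset.mem_sdiff.mpr ⟨hx, hxR⟩)
    intro T
    have hTm : (T : Finset α) ∈ 𝒮 := Finset.mem_of_mem_erase T.2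
    have hTne : (T : Finset α) ≠ S₀ := Finset.ne_of_mem_erase T.2
    have h0 : ∑ x ∈ Vs, u x * (if x ∈ (T : Finset α) then (1 : ZMod 2) else 0) = 0 :=
      Finset.sum_eq_zero fun x hx => by rw [huV x hx, zero_mul]
    have hexp : ∑ x ∈ Vs, u x * (if x ∈ (T : Finset α) then (1 : ZMod 2) else 0)
        = ∑ S : {x // x ∈ 𝒮.erase S₀}, g S *
            ((((S : Finset α) ∩ (T : Finset α)).card : ZMod 2)
              + ((S₀ ∩ (T : Finset α)).card : ZMod 2)) := by
      simp only [hu, Finset.sum_mul]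
      rw [Finset.sum_comm]
      refine Finset.sum_congr rfl fun S _ => ?_
      rw [← hBchi (S : Finset α) (T : Finset α) (hsub _ (Finset.mem_of_mem_erase S.2)),
        ← hBchi S₀ (T : Finset α) (hsub S₀ hS₀), mul_add, Finset.mul_sum, Finset.mul_sum,
        ← Finset.sum_add_distrib]
      exact Finset.sum_congr rfl fun x _ => by ring
    have hS0T : ((S₀ ∩ (T : Finset α)).card : ZMod 2) = (ℓ : ZMod 2) + 1 :=
      hpair S₀ hS₀ (T : Finset α) hTm (fun h => hTne h.symm)
    have heval : ∀ S : {x // x ∈ 𝒮.erase S₀},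
        ((((S : Finset α) ∩ (T : Finset α)).card : ZMod 2)
          + ((S₀ ∩ (T : Finset α)).card : ZMod 2)) = if S = T then 1 else 0 := by
      intro S
      by_cases hST : S = T
      · subst hST
        rw [Finset.inter_self, hScard (S : Finset α) hTm, hS0T, if_pos rfl]
        rw [← add_assoc, CharTwo.add_self_eq_zero, zero_add]
      · have hSTne : (S : Finset α) ≠ (T : Finset α) := fun h => hST (Subtype.coe_injective h)
        rw [hpair (S : Finset α) (Finset.mem_of_mem_erase S.2) (T : Finset α) hTm hSTne,
          hS0T, if_neg hST, CharTwo.add_self_eq_zero]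
    rw [hexp, Finset.sum_congr rfl (fun S _ => by rw [heval S])] at h0
    simpa [mul_ite] using h0
  -- conclude via dimension count
  have hcard1 := key.fintype_card_le_finrank
  rw [Module.finrank_fintype_fun_eq_card, Fintype.card_coe, Fintype.card_coe,
    Finset.card_erase_of_mem hS₀, hDcard] at hcard1
  have h1 : 1 ≤ 𝒮.card := Finset.card_pos.mpr ⟨S₀, hS₀⟩
  have hℓV : ℓ ≤ Vs.card := by
    calc ℓ = R.card := hRcard.symm
    _ ≤ Vs.card := Finset.card_le_card hRV
  omega
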